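/- Let p be a real polynomial of degree n ≥ 2 with only real zeroes and d ≥ 2 distinct zeroes λ₁ < ⋯ < λ_d, and let μ₁ < ⋯ < μ_{d−1} be the critical points of p with p(μⱼ) ≠ 0. Then on the real line, p(x)p''(x)/(p'(x))² = (n−1)/n + Σⱼ βⱼ/(x − μⱼ)² wherever defined, where βⱼ = p(μⱼ)/p''(μⱼ) < 0. -/

import Mathlib

open Polynomial


private lemma aux_sq_dvd_prime (f : ℝ[X]) (r : ℝ) (h0 : f.eval r = 0)
    (h1 : (derivative f).eval r = 0) : (X - C r) ^ 2 ∣ f := by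
  obtain ⟨g, hg⟩ := dvd_iff_isRoot.mpr h0
  have hd : derivative f = g + (X - C r) * derivative g := by
    rw [hg, derivative_mul]
    simp only [derivative_sub, derivative_X, derivative_C, sub_zero, one_mul]
  have hg0 : g.eval r = 0 := by
    have := congrArg (eval r) hd
    simpa [h1] using this.symm
  obtain ⟨h, hh⟩ := dvd_iff_isRoot.mpr hg0
  exact ⟨h, by rw [hg, hh]; ring⟩

private lemma aux_card_roots_real_prime (P : ℝ[X]) (hP : P ≠ 0)
    (hreal : ∀ z : ℂ, (P.map (algebraMap ℝ ℂ)).IsRoot z → z.im = 0) :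
    Multiset.card P.roots = P.natDegree := by
  classical
  set f := algebraMap ℝ ℂ with hf
  have hinj : Function.Injective f := f.injective
  have hQ0 : P.map f ≠ 0 := (Polynomial.map_ne_zero_iff hinj).mpr hP
  have hQcard : P.natDegree = Multiset.card (P.map f).roots :=
    (IsAlgClosed.card_roots_map_eq_natDegree_of_injective P hinj).symm
  have hroots : (P.map f).roots = P.roots.map f := by
    ext z
    by_cases hz : z.im = 0
    · have hzr : f z.re = z := by
        apply Complex.ext <;> simp [hf, hz]
      rw [← hzr, Multiset.count_map_eq_count' f _ hinj, count_roots, count_roots,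
        eq_rootMultiplicity_map hinj]
    · rw [Multiset.count_eq_zero.mpr, Multiset.count_eq_zero.mpr]
      · intro hmem
        obtain ⟨r, _, hr⟩ := Multiset.mem_map.mp hmem
        exact hz (by rw [← hr]; simp [hf])
      · intro hmem
        exact hz (hreal z ((mem_roots hQ0).mp hmem))
  rw [hQcard, hroots, Multiset.card_map]

private lemma aux_eval_deriv_prod_prime (M : Multiset ℝ) (a x : ℝ) (hx : ∀ r ∈ M, x ≠ r) :
    eval x (derivative (C a * (M.map fun r => X - C r).prod))
      = eval x (C a * (M.map fun r => X - C r).prod) * (M.map fun r => (x - r)⁻¹).sum := by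
  classical
  induction M using Multiset.induction_on with
  | empty => simp
  | cons r M ih =>
    have hxr : x - r ≠ 0 := sub_ne_zero.mpr (hx r (Multiset.mem_cons_self r M))
    have ih' := ih (fun s hs => hx s (Multiset.mem_cons_of_mem hs))
    simp only [Multiset.map_cons, Multiset.prod_cons, Multiset.sum_cons]
    have hre : C a * ((X - C r) * (M.map fun r => X - C r).prod)
        = (X - C r) * (C a * (M.map fun r => X - C r).prod) := by ring
    rw [hre, derivative_mul]
    simp only [derivative_sub, derivative_X, derivative_C, sub_zero, eval_add, eval_mul,
      eval_sub, eval_X, eval_C, eval_one]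
    rw [ih']
    field_simp
    simp only [eval_mul, eval_C]
    ring

private lemma aux_hasDerivAt_sum_prime (M : Multiset ℝ) (x : ℝ) (hx : ∀ r ∈ M, x ≠ r) :
    HasDerivAt (fun y => (M.map fun r => (y - r)⁻¹).sum)
      (-(M.map fun r => ((x - r) ^ 2)⁻¹).sum) x := by
  classical
  induction M using Multiset.induction_on with
  | empty => simpa using hasDerivAt_const x (0 : ℝ)
  | cons r M ih =>
    have hxr : x - r ≠ 0 := sub_ne_zero.mpr (hx r (Multiset.mem_cons_self r M))
    have ih' := ih (fun s hs => hx s (Multiset.mem_cons_of_mem hs))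
    have h1 : HasDerivAt (fun y : ℝ => (y - r)⁻¹) (-((x - r) ^ 2)⁻¹) x := by
      have := ((hasDerivAt_id x).sub_const r).inv hxr
      exact this.congr_deriv (by simp [div_eq_mul_inv])
    simp only [Multiset.map_cons, Multiset.sum_cons]
    have := h1.add ih'
    exact this.congr_deriv (by ring)

private lemma aux_crit_neg_prime (P : ℝ[X]) (hdeg : 0 < P.natDegree)
    (hcard : Multiset.card P.roots = P.natDegree) (μ : ℝ) (h0 : P.eval μ ≠ 0)
    (h1 : (derivative P).eval μ = 0) :
    P.eval μ * (derivative (derivative P)).eval μ < 0 := by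
  classical
  set M := P.roots with hM
  have hP0 : P ≠ 0 := fun h => by simp [h] at hdeg
  have hfac : C P.leadingCoeff * (M.map fun r => X - C r).prod = P :=
    C_leadingCoeff_mul_prod_multiset_X_sub_C hcard
  have hxr : ∀ x : ℝ, P.eval x ≠ 0 → ∀ r ∈ M, x ≠ r := by
    intro x hx r hr h
    exact hx (by rw [h]; exact (mem_roots hP0).mp hr)
  have hid : ∀ x : ℝ, P.eval x ≠ 0 →
      (derivative P).eval x = P.eval x * (M.map fun r => (x - r)⁻¹).sum := by
    intro x hx
    have := aux_eval_deriv_prod_prime M P.leadingCoeff x (hxr x hx)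
    rwa [hfac] at this
  have hopen : IsOpen {x : ℝ | P.eval x ≠ 0} := by
    have : {x : ℝ | P.eval x ≠ 0} = (fun x => P.eval x) ⁻¹' ({0}ᶜ) := rfl
    rw [this]
    exact isOpen_compl_singleton.preimage P.continuous
  have hev : (fun x => (derivative P).eval x)
      =ᶠ[nhds μ] fun x => P.eval x * (M.map fun r => (x - r)⁻¹).sum := by
    filter_upwards [hopen.mem_nhds h0] with x hx using hid x hx
  have hf : HasDerivAt (fun x => (derivative P).eval x)
      ((derivative (derivative P)).eval μ) μ := (derivative P).hasDerivAt μ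
  have hg : HasDerivAt (fun x => P.eval x * (M.map fun r => (x - r)⁻¹).sum)
      ((derivative P).eval μ * (M.map fun r => (μ - r)⁻¹).sum
        + P.eval μ * -(M.map fun r => ((μ - r) ^ 2)⁻¹).sum) μ :=
    (P.hasDerivAt μ).mul (aux_hasDerivAt_sum_prime M μ (hxr μ h0))
  have huniq := hf.unique (hg.congr_of_eventuallyEq hev)
  have hsum : 0 < (M.map fun r => ((μ - r) ^ 2)⁻¹).sum := by
    have hM0 : M ≠ 0 := by
      intro h
      rw [h] at hcard
      simp at hcard
      omega
    obtain ⟨r, hr⟩ := Multiset.exists_mem_of_ne_zero hM0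
    have hrpos : 0 < ((μ - r) ^ 2)⁻¹ := by
      have := sub_ne_zero.mpr (hxr μ h0 r hr)
      positivity
    refine lt_of_lt_of_le hrpos (Multiset.single_le_sum ?_ _
      (Multiset.mem_map_of_mem (fun r => ((μ - r) ^ 2)⁻¹) hr))
    intro y hy
    obtain ⟨s, _, hs⟩ := Multiset.mem_map.mp hy
    rw [← hs]
    positivity
  have hPP : P.eval μ * (derivative (derivative P)).eval μ
      = -((P.eval μ) ^ 2 * (M.map fun r => ((μ - r) ^ 2)⁻¹).sum) := by
    rw [huniq, h1]; ring
  rw [hPP]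
  have : 0 < (P.eval μ) ^ 2 * (M.map fun r => ((μ - r) ^ 2)⁻¹).sum :=
    mul_pos (by positivity) hsum
  linarith

open scoped Classical in
/-- **Partial fraction expansion of `R`.** Let `p` be real-rooted of degree `n ≥ 2`
with at least two distinct zeroes, and let `S` be the set of critical points `μ` of
`p` with `p(μ) ≠ 0`. Then for every `x` with `p'(x) ≠ 0`,
`p(x)p''(x)/(p'(x))² = (n−1)/n + Σ_{μ ∈ S} β_μ/(x − μ)²` with
`β_μ = p(μ)/p''(μ) < 0`. -/
theorem R_partial_fractions (p : ℝ[X]) (n : ℕ) (hn : p.natDegree = n) (hn2 : 2 ≤ n)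
    (hreal : ∀ z : ℂ, (p.map (algebraMap ℝ ℂ)).IsRoot z → z.im = 0)
    (hdist : ∃ x y : ℝ, x ≠ y ∧ p.IsRoot x ∧ p.IsRoot y)
    (S : Finset ℝ)
    (hS : S = (derivative p).roots.toFinset.filter (fun μ => p.eval μ ≠ 0)) :
    (∀ μ ∈ S, p.eval μ / (derivative (derivative p)).eval μ < 0) ∧
    (∀ x : ℝ, (derivative p).eval x ≠ 0 →
      p.eval x * (derivative (derivative p)).eval x / ((derivative p).eval x) ^ 2
        = ((n : ℝ) - 1) / n
          + ∑ μ ∈ S, (p.eval μ / (derivative (derivative p)).eval μ) / (x - μ) ^ 2) := by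
  have hp0 : p ≠ 0 := fun h => by rw [h] at hn; simp at hn; omega
  have ha : p.leadingCoeff ≠ 0 := leadingCoeff_ne_zero.mpr hp0
  have hcard : Multiset.card p.roots = n := by
    rw [aux_card_roots_real_prime p hp0 hreal, hn]
  -- degree of the derivative
  have hd1 : (derivative p).natDegree = n - 1 := by
    refine le_antisymm (by have := natDegree_derivative_le p; omega) ?_
    refine le_natDegree_of_ne_zero ?_
    rw [coeff_derivative]
    have h1 : n - 1 + 1 = n := by omega
    rw [h1, ← hn, coeff_natDegree]
    intro h
    rcases mul_eq_zero.mp h with h | h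
    · exact ha h
    · exact absurd h (by positivity)
  have hp'0 : derivative p ≠ 0 := by
    intro h
    rw [h] at hd1
    simp at hd1
    omega
  have hcard' : Multiset.card (derivative p).roots = n - 1 := by
    refine le_antisymm (by rw [← hd1]; exact (card_roots' _)) ?_
    have h2 := card_roots_le_derivative p
    omega
  have hSprop : ∀ μ ∈ S, (derivative p).eval μ = 0 ∧ p.eval μ ≠ 0 := by
    intro μ hμ
    rw [hS, Finset.mem_filter, Multiset.mem_toFinset] at hμ
    exact ⟨(mem_roots hp'0).mp hμ.1, hμ.2⟩
  have key : ∀ μ ∈ S, p.eval μ * (derivative (derivative p)).eval μ < 0 := by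
    intro μ hμ
    exact aux_crit_neg_prime p (by omega) (by rw [hcard, hn]) μ (hSprop μ hμ).2 (hSprop μ hμ).1
  have hp'' : ∀ μ ∈ S, (derivative (derivative p)).eval μ ≠ 0 := by
    intro μ hμ h
    have := key μ hμ
    rw [h, mul_zero] at this
    exact lt_irrefl 0 this
  have part1 : ∀ μ ∈ S, p.eval μ / (derivative (derivative p)).eval μ < 0 := by
    intro μ hμ
    rw [div_neg_iff]
    rcases mul_neg_iff.mp (key μ hμ) with ⟨h1, h2⟩ | ⟨h1, h2⟩
    · exact Or.inl ⟨h1, h2⟩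
    · exact Or.inr ⟨h1, h2⟩
  refine ⟨part1, ?_⟩
  -- notation
  set q : ℝ → ℝ[X] := fun μ => derivative p /ₘ (X - C μ) with hqdef
  set β : ℝ → ℝ := fun μ => p.eval μ / (derivative (derivative p)).eval μ with hβdef
  have hq : ∀ μ ∈ S, (X - C μ) * q μ = derivative p := by
    intro μ hμ
    exact mul_divByMonic_eq_iff_isRoot.mpr (hSprop μ hμ).1
  have hq2 : ∀ μ ∈ S, q μ + (X - C μ) * derivative (q μ) = derivative (derivative p) := by
    intro μ hμ
    have := congrArg derivative (hq μ hμ)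
    rwa [derivative_mul, derivative_sub, derivative_X, derivative_C, sub_zero, one_mul] at this
  have hqμ : ∀ μ ∈ S, (q μ).eval μ = (derivative (derivative p)).eval μ := by
    intro μ hμ
    have := congrArg (eval μ) (hq2 μ hμ)
    simpa using this
  have hq'μ : ∀ μ ∈ S, 2 * (derivative (q μ)).eval μ
      = (derivative (derivative (derivative p))).eval μ := by
    intro μ hμ
    have := congrArg derivative (hq2 μ hμ)
    rw [derivative_add, derivative_mul, derivative_sub, derivative_X, derivative_C, sub_zero,
      one_mul] at this
    have h2 := congrArg (eval μ) this
    simp only [eval_add, eval_mul, eval_sub, eval_X, eval_C, sub_self, zero_mul, add_zero] at h2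
    linarith [h2]
  have hqν : ∀ μ ∈ S, ∀ x : ℝ, (derivative p).eval x = 0 → x ≠ μ → (q μ).eval x = 0 := by
    intro μ hμ x hx hxμ
    have := congrArg (eval x) (hq μ hμ)
    simp only [eval_mul, eval_sub, eval_X, eval_C] at this
    rw [hx] at this
    rcases mul_eq_zero.mp this with h | h
    · exact absurd (sub_eq_zero.mp h) hxμ
    · exact h
  set D : ℝ[X] := C (n : ℝ) * (p * derivative (derivative p))
      - C ((n : ℝ) - 1) * (derivative p) ^ 2
      - C (n : ℝ) * ∑ μ ∈ S, C (β μ) * (q μ) ^ 2 with hDdef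
  have hDeval : ∀ r ∈ S, D.eval r = 0 := by
    intro r hr
    have h0 := (hSprop r hr).1
    have hsum : ∑ μ ∈ S, β μ * ((q μ).eval r) ^ 2
        = p.eval r * (derivative (derivative p)).eval r := by
      rw [Finset.sum_eq_single_of_mem r hr]
      · rw [hqμ r hr]
        simp only [hβdef]
        rw [sq, ← mul_assoc, div_mul_cancel₀ _ (hp'' r hr)]
      · intro ν hν hνr
        rw [hqν ν hν r h0 (Ne.symm hνr)]
        simp
    simp only [hDdef, eval_sub, eval_mul, eval_C, eval_pow, eval_finset_sum]
    rw [h0, hsum]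
    ring
  have hD'eval : ∀ r ∈ S, (derivative D).eval r = 0 := by
    intro r hr
    have h0 := (hSprop r hr).1
    have h2 := hq'μ r hr
    have hsum : ∑ μ ∈ S, β μ * (2 * (q μ).eval r * (derivative (q μ)).eval r)
        = p.eval r * (derivative (derivative (derivative p))).eval r := by
      rw [Finset.sum_eq_single_of_mem r hr]
      · rw [hqμ r hr]
        simp only [hβdef]
        rw [div_mul_eq_mul_div, div_eq_iff (hp'' r hr)]
        linear_combination p.eval r * (derivative (derivative p)).eval r * h2
      · intro ν hν hνr
        rw [hqν ν hν r h0 (Ne.symm hνr)]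
        simp
    simp only [hDdef, derivative_sub, derivative_mul, derivative_C, derivative_pow,
      derivative_sum, zero_mul, zero_add]
    simp only [eval_sub, eval_add, eval_mul, eval_C, eval_pow, eval_finset_sum]
    rw [h0]
    simp only [show (2:ℕ)-1 = 1 from rfl, pow_one, Nat.cast_ofNat]
    rw [hsum]
    ring
  have hdvd : (derivative p) ^ 2 ∣ D := by
    set N := (derivative p).roots with hN
    set c := (derivative p).leadingCoeff with hc
    have hc0 : c ≠ 0 := leadingCoeff_ne_zero.mpr hp'0
    have hfac : C c * (N.map fun r => X - C r).prod = derivative p :=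
      C_leadingCoeff_mul_prod_multiset_X_sub_C (by rw [← hN, hcard', hd1])
    have hdvd1 : ∀ r ∈ N.toFinset, (X - C r) ^ (2 * N.count r) ∣ D := by
      intro r hrN
      have hrroot : (derivative p).eval r = 0 :=
        (mem_roots hp'0).mp (Multiset.mem_toFinset.mp hrN)
      by_cases hpr : p.eval r = 0
      · -- r is a multiple root of p
        have hm1 : (derivative p).rootMultiplicity r = p.rootMultiplicity r - 1 :=
          derivative_rootMultiplicity_of_root hpr
        have hmpos : 0 < (derivative p).rootMultiplicity r :=
          (rootMultiplicity_pos hp'0).mpr hrroot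
        set m := p.rootMultiplicity r with hm
        have hm2 : 2 ≤ m := by omega
        have hcount : N.count r = m - 1 := by rw [hN, count_roots, hm1]
        have hdp : (X - C r) ^ m ∣ p := pow_rootMultiplicity_dvd p r
        have hdp' : (X - C r) ^ (m - 1) ∣ derivative p := by
          have := pow_rootMultiplicity_dvd (derivative p) r
          rwa [hm1] at this
        have hdp'' : (X - C r) ^ (m - 2) ∣ derivative (derivative p) := by
          have h4 : (derivative (derivative p)).rootMultiplicity r
              = (derivative p).rootMultiplicity r - 1 :=
            derivative_rootMultiplicity_of_root hrroot
          have h3 := pow_rootMultiplicity_dvd (derivative (derivative p)) r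
          rw [h4, hm1] at h3
          have h5 : m - 1 - 1 = m - 2 := by omega
          rwa [h5] at h3
        rw [hcount]
        have e1 : (X - C r) ^ (2 * (m - 1)) ∣ C (n : ℝ) * (p * derivative (derivative p)) := by
          refine Dvd.dvd.mul_left ?_ _
          have h6 : (X - C r) ^ (2 * (m - 1)) = (X - C r) ^ m * (X - C r) ^ (m - 2) := by
            rw [← pow_add]
            congr 1
            omega
          rw [h6]
          exact mul_dvd_mul hdp hdp''
        have e2 : (X - C r) ^ (2 * (m - 1)) ∣ C ((n : ℝ) - 1) * (derivative p) ^ 2 := by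
          refine Dvd.dvd.mul_left ?_ _
          have h6 : 2 * (m - 1) = (m - 1) * 2 := by omega
          rw [h6, pow_mul]
          exact pow_dvd_pow_of_dvd hdp' 2
        have e3 : (X - C r) ^ (2 * (m - 1)) ∣ C (n : ℝ) * ∑ μ ∈ S, C (β μ) * (q μ) ^ 2 := by
          refine Dvd.dvd.mul_left (Finset.dvd_sum fun μ hμ => Dvd.dvd.mul_left ?_ _) _
          have hrμ : r ≠ μ := fun h => (hSprop μ hμ).2 (h ▸ hpr)
          have hcop2 : IsCoprime ((X - C r) ^ (m - 1)) (X - C μ) :=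
            (isCoprime_X_sub_C_of_isUnit_sub
              (isUnit_iff_ne_zero.mpr (sub_ne_zero.mpr hrμ))).pow_left
          have h7 : (X - C r) ^ (m - 1) ∣ q μ := by
            refine hcop2.dvd_of_dvd_mul_left ?_
            rw [hq μ hμ]
            exact hdp'
          have h6 : 2 * (m - 1) = (m - 1) * 2 := by omega
          rw [h6, pow_mul]
          exact pow_dvd_pow_of_dvd h7 2
        exact dvd_sub (dvd_sub e1 e2) e3
      · -- r is a simple critical point, r ∈ S
        have hrS : r ∈ S := by
          rw [hS]
          exact Finset.mem_filter.mpr ⟨hrN, hpr⟩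
        have hp''0 : derivative (derivative p) ≠ 0 := by
          intro h
          exact hp'' r hrS (by rw [h]; simp)
        have hcount : N.count r = 1 := by
          rw [hN, count_roots]
          refine le_antisymm ?_ ((rootMultiplicity_pos hp'0).mpr hrroot)
          by_contra h
          push_neg at h
          have h4 : (derivative (derivative p)).rootMultiplicity r
              = (derivative p).rootMultiplicity r - 1 :=
            derivative_rootMultiplicity_of_root hrroot
          have hpos : 0 < (derivative (derivative p)).rootMultiplicity r := by omega
          exact hp'' r hrS ((rootMultiplicity_pos hp''0).mp hpos)
        rw [hcount, mul_one]
        exact aux_sq_dvd_prime D r (hDeval r hrS) (hD'eval r hrS)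
    have hcop : (↑N.toFinset : Set ℝ).Pairwise
        (Function.onFun IsCoprime fun r => (X - C r) ^ (2 * N.count r)) := by
      intro r _ s _ hrs
      exact (isCoprime_X_sub_C_of_isUnit_sub
        (isUnit_iff_ne_zero.mpr (sub_ne_zero.mpr hrs))).pow
    have hProdDvd : (∏ r ∈ N.toFinset, (X - C r) ^ (2 * N.count r)) ∣ D :=
      Finset.prod_dvd_of_coprime hcop hdvd1
    have hsq : (derivative p) ^ 2 = C (c ^ 2) * ∏ r ∈ N.toFinset, (X - C r) ^ (2 * N.count r) := by
      rw [← hfac, Finset.prod_multiset_map_count, mul_pow, ← C_pow, ← Finset.prod_pow]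
      congr 1
      refine Finset.prod_congr rfl fun r _ => ?_
      rw [← pow_mul, mul_comm]
    obtain ⟨t, ht⟩ := hProdDvd
    refine ⟨C ((c ^ 2)⁻¹) * t, ?_⟩
    rw [ht, hsq, mul_mul_mul_comm, ← C_mul, mul_inv_cancel₀ (pow_ne_zero 2 hc0), C_1, one_mul]
  have hq_deg : ∀ μ ∈ S, (q μ).natDegree = n - 2 := by
    intro μ hμ
    have h1 : (q μ).natDegree = (derivative p).natDegree - (X - C μ).natDegree := by
      rw [hqdef]
      exact natDegree_divByMonic _ (monic_X_sub_C μ)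
    rw [h1, hd1, natDegree_X_sub_C]
    omega
  have hd2 : (derivative (derivative p)).natDegree = n - 2 := by
    refine le_antisymm ?_ (le_natDegree_of_ne_zero ?_)
    · have h1 := natDegree_derivative_le (derivative p)
      rw [hd1] at h1
      omega
    · rw [coeff_derivative, show n - 2 + 1 = n - 1 from by omega, ← hd1, coeff_natDegree]
      intro h
      rcases mul_eq_zero.mp h with h | h
      · exact leadingCoeff_ne_zero.mpr hp'0 h
      · exact absurd h (by positivity)
  have hcoeffn : p.coeff n = p.leadingCoeff := by rw [← hn, coeff_natDegree]
  have hlc1 : (derivative p).leadingCoeff = p.leadingCoeff * n := by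
    rw [leadingCoeff, hd1, coeff_derivative, show n - 1 + 1 = n from by omega, hcoeffn]
    congr 1
    push_cast [Nat.cast_sub (show 1 ≤ n by omega)]
    ring
  have hlc2 : (derivative (derivative p)).leadingCoeff = p.leadingCoeff * n * ((n : ℝ) - 1) := by
    rw [leadingCoeff, hd2, coeff_derivative, show n - 2 + 1 = n - 1 from by omega, ← hd1,
      coeff_natDegree, hlc1]
    congr 1
    push_cast [Nat.cast_sub (show 2 ≤ n by omega)]
    ring
  have hdegD : D.degree < ((derivative p) ^ 2).degree := by
    have hdegp2 : ((derivative p) ^ 2).degree = ((2 * (n - 1) : ℕ) : WithBot ℕ) := by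
      rw [degree_eq_natDegree (pow_ne_zero 2 hp'0), natDegree_pow, hd1]
    rw [hdegp2, degree_lt_iff_coeff_zero]
    intro m hm
    have hqsq : ∀ μ ∈ S, (C (β μ) * (q μ) ^ 2).natDegree < m := by
      intro μ hμ
      have h1 : (C (β μ) * (q μ) ^ 2).natDegree ≤ 0 + (2 * (n - 2)) := by
        refine natDegree_mul_le.trans (add_le_add (natDegree_C _).le ?_)
        rw [natDegree_pow, hq_deg μ hμ]
      omega
    have hsumc : (∑ μ ∈ S, C (β μ) * (q μ) ^ 2).coeff m = 0 := by
      rw [finset_sum_coeff]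
      refine Finset.sum_eq_zero fun μ hμ => coeff_eq_zero_of_natDegree_lt (hqsq μ hμ)
    simp only [hDdef, coeff_sub, coeff_C_mul, hsumc, mul_zero, sub_zero]
    rcases eq_or_lt_of_le hm with hm' | hm'
    · -- top coefficient cancels
      have h1 : (p * derivative (derivative p)).coeff m = p.leadingCoeff ^ 2 * n * ((n:ℝ) - 1) := by
        rw [← hm', show 2 * (n - 1) = p.natDegree + (derivative (derivative p)).natDegree from by
          rw [hn, hd2]; omega, coeff_mul_degree_add_degree, hlc2]
        ring
      have h2 : ((derivative p) ^ 2).coeff m = (p.leadingCoeff * n) ^ 2 := by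
        rw [sq, ← hm', show 2 * (n - 1) = (derivative p).natDegree + (derivative p).natDegree
          from by rw [hd1]; omega, coeff_mul_degree_add_degree, hlc1]
        ring
      rw [h1, h2]
      ring
    · have h1 : (p * derivative (derivative p)).coeff m = 0 := by
        refine coeff_eq_zero_of_natDegree_lt (natDegree_mul_le.trans_lt ?_)
        rw [hn, hd2]
        omega
      have h2 : ((derivative p) ^ 2).coeff m = 0 := by
        refine coeff_eq_zero_of_natDegree_lt ?_
        rw [natDegree_pow, hd1]
        omega
      rw [h1, h2]
      ring
  have hD0 : D = 0 := eq_zero_of_dvd_of_degree_lt hdvd hdegD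
  -- final evaluation
  intro x hx
  have hn0 : (n : ℝ) ≠ 0 := Nat.cast_ne_zero.mpr (by omega)
  have hDx := congrArg (eval x) hD0
  simp only [hDdef, eval_sub, eval_mul, eval_C, eval_pow, eval_finset_sum, eval_zero] at hDx
  have hterm : ∀ μ ∈ S, β μ / (x - μ) ^ 2
      = β μ * ((q μ).eval x) ^ 2 / ((derivative p).eval x) ^ 2 := by
    intro μ hμ
    have hxμ : x - μ ≠ 0 := sub_ne_zero.mpr (fun h => hx (h ▸ (hSprop μ hμ).1))
    have hqx : (x - μ) * (q μ).eval x = (derivative p).eval x := by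
      have := congrArg (eval x) (hq μ hμ)
      simpa using this
    rw [div_eq_div_iff (pow_ne_zero 2 hxμ) (pow_ne_zero 2 hx)]
    linear_combination (-(β μ * ((derivative p).eval x + (x - μ) * (q μ).eval x))) * hqx
  rw [Finset.sum_congr rfl hterm, ← Finset.sum_div,
    div_add_div _ _ hn0 (pow_ne_zero 2 hx),
    div_eq_div_iff (pow_ne_zero 2 hx) (mul_ne_zero hn0 (pow_ne_zero 2 hx))]
  linear_combination (((derivative p).eval x) ^ 2) * hDx
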